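/- Assume a = 0, b > 0 and c > (b·q₁)^(α₁/α₂)·b·q₂, where q₁ = sin(α₁π/2)/sin((α₁+α₂)π/2), q₂ = sin(α₂π/2)/sin((α₁+α₂)π/2). Then the unique positive root ω₀ of the equation h₂(ω) = 0 is ω₀ = (b·q₁)^(1/α₂), and at this root h₁(ω₀) = c - (b·q₁)^(α₁/α₂)·b·q₂ > 0. -/

import Mathlib

theorem stmt_8 (α₁ α₂ b c q₁ q₂ : ℝ) (hα₁ : 0 < α₁) (hα₁₂ : α₁ < α₂) (hα₂ : α₂ ≤ 1)
    (hq₁ : q₁ = Real.sin (α₁ * Real.pi / 2) / Real.sin ((α₁ + α₂) * Real.pi / 2))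
    (hq₂ : q₂ = Real.sin (α₂ * Real.pi / 2) / Real.sin ((α₁ + α₂) * Real.pi / 2))
    (hb : 0 < b) (hc : c > (b * q₁) ^ (α₁ / α₂) * b * q₂) :
    (∀ ω : ℝ, 0 < ω →
        (ω ^ (α₁ + α₂) * Real.sin ((α₁ + α₂) * Real.pi / 2)
            - b * ω ^ α₁ * Real.sin (α₁ * Real.pi / 2) = 0
          ↔ ω = (b * q₁) ^ (1 / α₂))) ∧
    ((b * q₁) ^ (1 / α₂)) ^ (α₁ + α₂) * Real.cos ((α₁ + α₂) * Real.pi / 2)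
        - b * ((b * q₁) ^ (1 / α₂)) ^ α₁ * Real.cos (α₁ * Real.pi / 2) + c
      = c - (b * q₁) ^ (α₁ / α₂) * b * q₂ ∧
    0 < c - (b * q₁) ^ (α₁ / α₂) * b * q₂ := by
  have hπ := Real.pi_pos
  have hα₂0 : 0 < α₂ := lt_trans hα₁ hα₁₂
  have hsS : 0 < Real.sin ((α₁ + α₂) * Real.pi / 2) :=
    Real.sin_pos_of_pos_of_lt_pi (by positivity) (by nlinarith)
  have hs1 : 0 < Real.sin (α₁ * Real.pi / 2) :=
    Real.sin_pos_of_pos_of_lt_pi (by positivity) (by nlinarith)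
  have hq1pos : 0 < q₁ := by rw [hq₁]; positivity
  have hbq : 0 < b * q₁ := by positivity
  have htrig : Real.sin (α₁ * Real.pi / 2) * Real.cos ((α₁ + α₂) * Real.pi / 2)
      - Real.cos (α₁ * Real.pi / 2) * Real.sin ((α₁ + α₂) * Real.pi / 2)
      = - Real.sin (α₂ * Real.pi / 2) := by
    have h := Real.sin_sub (α₁ * Real.pi / 2) ((α₁ + α₂) * Real.pi / 2)
    have harg : α₁ * Real.pi / 2 - (α₁ + α₂) * Real.pi / 2 = -(α₂ * Real.pi / 2) := by ring
    rw [harg, Real.sin_neg] at h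
    linarith
  have hsin1 : Real.sin (α₁ * Real.pi / 2) = q₁ * Real.sin ((α₁ + α₂) * Real.pi / 2) := by
    rw [hq₁]; exact (div_mul_cancel₀ _ (ne_of_gt hsS)).symm
  have hω₀pos : 0 < (b * q₁) ^ (1 / α₂) := Real.rpow_pos_of_pos hbq _
  have hω₀α₂ : ((b * q₁) ^ (1 / α₂) : ℝ) ^ α₂ = b * q₁ := by
    rw [← Real.rpow_mul hbq.le, one_div, inv_mul_cancel₀ (ne_of_gt hα₂0), Real.rpow_one]
  have hω₀α₁ : ((b * q₁) ^ (1 / α₂) : ℝ) ^ α₁ = (b * q₁) ^ (α₁ / α₂) := by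
    rw [← Real.rpow_mul hbq.le, one_div, inv_mul_eq_div]
  have hkey : q₁ * Real.cos ((α₁ + α₂) * Real.pi / 2) - Real.cos (α₁ * Real.pi / 2) = -q₂ := by
    rw [hq₁, hq₂]
    rw [div_mul_eq_mul_div, ← neg_div, eq_div_iff (ne_of_gt hsS), sub_mul, div_mul_cancel₀ _ (ne_of_gt hsS)]
    linear_combination htrig
  refine ⟨?_, ?_, by linarith⟩
  · intro ω hω
    constructor
    · intro h
      rw [Real.rpow_add hω] at h
      have hne : ω ^ α₁ ≠ 0 := ne_of_gt (Real.rpow_pos_of_pos hω _)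
      have hfac : ω ^ α₁ * (ω ^ α₂ * Real.sin ((α₁ + α₂) * Real.pi / 2)
          - b * Real.sin (α₁ * Real.pi / 2)) = 0 := by linear_combination h
      have h2 : ω ^ α₂ * Real.sin ((α₁ + α₂) * Real.pi / 2)
          - b * Real.sin (α₁ * Real.pi / 2) = 0 := by
        rcases mul_eq_zero.mp hfac with h' | h'
        · exact absurd h' hne
        · exact h'
      have heq : ω ^ α₂ = b * q₁ := by
        rw [hsin1] at h2
        have : (ω ^ α₂ - b * q₁) * Real.sin ((α₁ + α₂) * Real.pi / 2) = 0 := by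
          linear_combination h2
        rcases mul_eq_zero.mp this with h' | h'
        · linarith
        · exact absurd h' (ne_of_gt hsS)
      rw [← heq, ← Real.rpow_mul hω.le, mul_one_div, div_self (ne_of_gt hα₂0), Real.rpow_one]
    · rintro rfl
      rw [Real.rpow_add hω₀pos, hω₀α₂, hsin1]
      ring
  · rw [Real.rpow_add hω₀pos, hω₀α₂, hω₀α₁]
    linear_combination (b * q₁) ^ (α₁ / α₂) * b * hkey
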